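/- Let n ≥ 2 and let s_{i,j} ∈ ℂ be arbitrary scalars for 1 ≤ i ≤ j ≤ n−1. For each d = 1,…,n−1 let V_d ⊆ ℂ^n be the span of the d vectors v_k + Σ_{j=d}^{n−1} s_{k,j} v_{j+1}, k = 1,…,d. Then dim V_d = d for every d, and pr_{d+1, d'}(V_d) ⊆ V_{d'} for all 1 ≤ d < d' ≤ n−1. -/

import Mathlib

/-- The projection `pr_{a,b} : ℂⁿ → ℂⁿ` setting the (1-based) coordinates
`a, …, b` to zero; if `a > b` it is the identity. -/
noncomputable def pr (n a b : ℕ) : (Fin n → ℂ) →ₗ[ℂ] (Fin n → ℂ) :=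
  LinearMap.pi fun i : Fin n =>
    if a ≤ (i : ℕ) + 1 ∧ (i : ℕ) + 1 ≤ b then 0 else LinearMap.proj i

/-- The standard basis vector `v_m` of `ℂⁿ` (1-based: `v_m` has a `1` in the
`m`-th position, `1 ≤ m ≤ n`, and is zero elsewhere). -/
noncomputable def stdv (n m : ℕ) : Fin n → ℂ := fun i => if (i : ℕ) + 1 = m then 1 else 0

lemma pr_stdv (n a b m : ℕ) :
    pr n a b (stdv n m) = if a ≤ m ∧ m ≤ b then 0 else stdv n m := by
  funext i
  simp only [pr, LinearMap.pi_apply]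
  by_cases hi : (i : ℕ) + 1 = m
  · subst hi
    split_ifs <;> simp_all [stdv]
  · split_ifs <;> simp_all [stdv]

/-- Let `n ≥ 2` and let `s_{i,j} ∈ ℂ` be arbitrary scalars. For `d = 1, …, n-1`
let `V_d ⊆ ℂⁿ` be the span of the `d` vectors
`v_k + Σ_{j=d}^{n-1} s_{k,j} v_{j+1}`, `k = 1, …, d`. Then `dim V_d = d` for
every `d`, and `pr_{d+1, d'}(V_d) ⊆ V_{d'}` for all `1 ≤ d < d' ≤ n-1`. -/
theorem bigCell_chain (n : ℕ) (hn : 2 ≤ n) (s : ℕ → ℕ → ℂ)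
    (V : ℕ → Submodule ℂ (Fin n → ℂ))
    (hV : ∀ d, V d = Submodule.span ℂ
      {x | ∃ k, 1 ≤ k ∧ k ≤ d ∧
        x = stdv n k + ∑ j ∈ Finset.Icc d (n - 1), s k j • stdv n (j + 1)}) :
    (∀ d, 1 ≤ d → d ≤ n - 1 → Module.finrank ℂ (V d) = d) ∧
    (∀ d d', 1 ≤ d → d < d' → d' ≤ n - 1 →
      Submodule.map (pr n (d + 1) d') (V d) ≤ V d') := by
  constructor
  · intro d hd1 hd2
    rw [hV d]
    set f : Fin d → (Fin n → ℂ) := fun k =>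
      stdv n ((k : ℕ) + 1) +
        ∑ j ∈ Finset.Icc d (n - 1), s ((k : ℕ) + 1) j • stdv n (j + 1) with hf
    have hset : {x | ∃ k, 1 ≤ k ∧ k ≤ d ∧
        x = stdv n k + ∑ j ∈ Finset.Icc d (n - 1), s k j • stdv n (j + 1)}
        = Set.range f := by
      ext x
      constructor
      · rintro ⟨k, hk1, hk2, rfl⟩
        refine ⟨⟨k - 1, by omega⟩, ?_⟩
        have hk : k - 1 + 1 = k := Nat.sub_add_cancel hk1
        simp only [hf]
        show stdv n (k - 1 + 1) + _ = _
        rw [hk]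
      · rintro ⟨k, rfl⟩
        exact ⟨(k : ℕ) + 1, by omega, by omega, rfl⟩
    rw [hset]
    have hdn : d < n := by omega
    have hli : LinearIndependent ℂ f := by
      apply LinearIndependent.of_comp
        (LinearMap.funLeft ℂ ℂ (fun i : Fin d => Fin.castLE hdn.le i))
      have hcomp : (LinearMap.funLeft ℂ ℂ (fun i : Fin d => Fin.castLE hdn.le i)) ∘ f
          = fun k => Pi.single k (1 : ℂ) := by
        funext k i
        simp only [Function.comp_apply, LinearMap.funLeft_apply, hf, Pi.add_apply,
          Finset.sum_apply, Pi.smul_apply, stdv, Fin.coe_castLE]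
        have hji : ∀ j ∈ Finset.Icc d (n - 1),
            s ((k : ℕ) + 1) j • (if (i : ℕ) + 1 = j + 1 then (1 : ℂ) else 0) = 0 := by
          intro j hj
          have hj1 := (Finset.mem_Icc.mp hj).1
          have hne : ¬ ((i : ℕ) + 1 = j + 1) := by omega
          rw [if_neg hne, smul_zero]
        rw [Finset.sum_congr rfl hji]
        simp only [Finset.sum_const_zero, add_zero, Pi.single_apply]
        by_cases h : i = k
        · simp [h]
        · have : ¬ ((i : ℕ) + 1 = (k : ℕ) + 1) := by
            simp [Fin.ext_iff] at h; omega
          simp [h, this]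
          omega
      have hb : ⇑(Pi.basisFun ℂ (Fin d)) = fun k => Pi.single k (1 : ℂ) :=
        funext fun k => by simp [Pi.basisFun_apply]
      rw [hcomp, ← hb]
      exact (Pi.basisFun ℂ (Fin d)).linearIndependent
    rw [finrank_span_eq_card hli]
    simp
  · intro d d' hd hdd' hd'
    rw [hV d, hV d', Submodule.map_span]
    apply Submodule.span_le.mpr
    rintro _ ⟨x, ⟨k, hk1, hk2, rfl⟩, rfl⟩
    apply Submodule.subset_span
    refine ⟨k, hk1, by omega, ?_⟩
    rw [map_add, map_sum]
    have h1 : pr n (d + 1) d' (stdv n k) = stdv n k := by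
      rw [pr_stdv, if_neg]; omega
    rw [h1]
    congr 1
    have hstep : ∀ j, pr n (d + 1) d' (s k j • stdv n (j + 1))
        = s k j • (if d + 1 ≤ j + 1 ∧ j + 1 ≤ d' then 0 else stdv n (j + 1)) := by
      intro j; rw [map_smul, pr_stdv]
    rw [Finset.sum_congr rfl (fun j _ => hstep j)]
    have hsub : Finset.Icc d' (n - 1) ⊆ Finset.Icc d (n - 1) := by
      apply Finset.Icc_subset_Icc_left; omega
    have hvan : ∀ j ∈ Finset.Icc d (n - 1), j ∉ Finset.Icc d' (n - 1) →
        s k j • (if d + 1 ≤ j + 1 ∧ j + 1 ≤ d' then (0 : Fin n → ℂ) else stdv n (j + 1)) = 0 := by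
      intro j hj hj'
      rw [Finset.mem_Icc] at hj
      rw [Finset.mem_Icc] at hj'
      rw [if_pos (by omega)]
      simp
    rw [← Finset.sum_subset hsub hvan]
    apply Finset.sum_congr rfl
    intro j hj
    rw [Finset.mem_Icc] at hj
    rw [if_neg (by omega)]
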